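/- Let B ⊆ ℝ² be a finite set and let q ∈ ℝ² with q ∉ convexHull(B). Suppose a, b ∈ B satisfy cross(a − q, p − q) ≥ 0 and cross(b − q, p − q) ≤ 0 for every p ∈ B. Then for every p ∈ B there exist reals s, t ≥ 0 with p − q = s·(a − q) + t·(b − q). (The whole bucket B is contained in the convex cone with apex q spanned by the two tangent points a and b.) -/

import Mathlib

/-- The planar cross product. -/
def cross (u v : ℝ × ℝ) : ℝ := u.1 * v.2 - u.2 * v.1

lemma seg_mem {x y q : ℝ × ℝ} {μ : ℝ} (hμ : μ ≤ 0) (h : x - q = μ • (y - q)) :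
    q ∈ segment ℝ x y := by
  have h1 : x.1 - q.1 = μ * (y.1 - q.1) := by
    have := congrArg Prod.fst h; simpa using this
  have h2 : x.2 - q.2 = μ * (y.2 - q.2) := by
    have := congrArg Prod.snd h; simpa using this
  have hpos : (0:ℝ) < 1 - μ := by linarith
  refine ⟨1/(1-μ), -μ/(1-μ), div_nonneg zero_le_one hpos.le,
    div_nonneg (by linarith) hpos.le, ?_, ?_⟩
  · field_simp
    ring
  · apply Prod.ext
    · show 1/(1-μ) * x.1 + (-μ/(1-μ)) * y.1 = q.1
      field_simp
      nlinarith [h1]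
    · show 1/(1-μ) * x.2 + (-μ/(1-μ)) * y.2 = q.2
      field_simp
      nlinarith [h2]

lemma parallel_of_cross_eq_zero {u v : ℝ × ℝ} (hu : u ≠ 0) (h : cross u v = 0) :
    ∃ l : ℝ, v = l • u := by
  unfold cross at h
  rcases eq_or_ne u.1 0 with h1 | h1
  · have h2 : u.2 ≠ 0 := by
      intro h2; exact hu (Prod.ext h1 h2)
    have hv1 : v.1 = 0 := by
      have : u.2 * v.1 = 0 := by rw [h1] at h; linarith
      rcases mul_eq_zero.mp this with h' | h'
      · exact absurd h' h2
      · exact h'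
    refine ⟨v.2 / u.2, Prod.ext ?_ ?_⟩
    · show v.1 = v.2 / u.2 * u.1
      rw [hv1, h1, mul_zero]
    · show v.2 = v.2 / u.2 * u.2
      field_simp
  · refine ⟨v.1 / u.1, Prod.ext ?_ ?_⟩
    · show v.1 = v.1 / u.1 * u.1
      field_simp
    · show v.2 = v.1 / u.1 * u.2
      field_simp
      nlinarith [h]

/-- The whole set `B` is contained in the convex cone with apex `q` spanned by the
two tangent directions `a - q` and `b - q`. -/
theorem mem_tangent_cone (B : Set (ℝ × ℝ)) (hB : B.Finite) (q : ℝ × ℝ)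
    (hq : q ∉ convexHull ℝ B) {a b : ℝ × ℝ} (ha : a ∈ B) (hb : b ∈ B)
    (hta : ∀ p ∈ B, 0 ≤ cross (a - q) (p - q))
    (htb : ∀ p ∈ B, cross (b - q) (p - q) ≤ 0) :
    ∀ p ∈ B, ∃ s t : ℝ, 0 ≤ s ∧ 0 ≤ t ∧ p - q = s • (a - q) + t • (b - q) := by
  intro p hp
  have hsub := subset_convexHull ℝ B
  have hane : a - q ≠ 0 := by
    intro h
    exact hq (by rw [show q = a from (sub_eq_zero.mp h).symm]; exact hsub ha)
  have hbne : b - q ≠ 0 := by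
    intro h
    exact hq (by rw [show q = b from (sub_eq_zero.mp h).symm]; exact hsub hb)
  have hD : 0 ≤ cross (a - q) (b - q) := hta b hb
  rcases hD.lt_or_eq with hDpos | hDzero
  · have hD' : (a.1 - q.1) * (b.2 - q.2) - (a.2 - q.2) * (b.1 - q.1) ≠ 0 := by
      have := ne_of_gt hDpos
      simpa [cross] using this
    refine ⟨-cross (b - q) (p - q) / cross (a - q) (b - q),
      cross (a - q) (p - q) / cross (a - q) (b - q),
      div_nonneg (neg_nonneg.2 (htb p hp)) hDpos.le,
      div_nonneg (hta p hp) hDpos.le, ?_⟩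
    apply Prod.ext <;>
      simp only [cross, Prod.fst_sub, Prod.snd_sub, Prod.fst_add, Prod.snd_add,
        Prod.smul_fst, Prod.smul_snd, smul_eq_mul] <;>
      · rw [div_mul_eq_mul_div, div_mul_eq_mul_div, ← add_div, eq_div_iff hD']
        ring
  · obtain ⟨lam, hlam⟩ := parallel_of_cross_eq_zero hane hDzero.symm
    have hlam_pos : 0 < lam := by
      rcases lt_trichotomy lam 0 with hl | hl | hl
      · exact absurd ((segment_subset_convexHull hb ha) (seg_mem hl.le hlam)) hq
      · exact absurd (by rw [hlam, hl, zero_smul] : b - q = 0) hbne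
      · exact hl
    have hc : cross (a - q) (p - q) = 0 := by
      have h1 := hta p hp
      have h2 := htb p hp
      have h3 : cross (b - q) (p - q) = lam * cross (a - q) (p - q) := by
        rw [hlam]; unfold cross; simp; ring
      nlinarith
    obtain ⟨μ, hμ⟩ := parallel_of_cross_eq_zero hane hc
    have hμ' : p - q = μ • (a - q) := hμ
    have hμ_nonneg : 0 ≤ μ := by
      by_contra hneg
      push_neg at hneg
      exact hq ((segment_subset_convexHull hp ha) (seg_mem hneg.le hμ'))
    exact ⟨μ, 0, hμ_nonneg, le_refl 0, by rw [hμ', zero_smul, add_zero]⟩
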